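/- Let n ≥ 1, let A be a real n × n symmetric matrix such that A_{ij} ≤ 0 for all i ≠ j and such that A is diagonally dominant, i.e., A_{kk} ≥ Σ_{i ≠ k} |A_{ik}| for every k. Let q ≥ 1 be an odd integer. Then for every vector u ∈ ℝⁿ one has Σ_{i=1}^{n} Σ_{j=1}^{n} u_i^q · u_j · A_{ij} ≥ 0. -/

import Mathlib

open Finset

private lemma swap_sum {n : ℕ} (f : Fin n → Fin n → ℝ) :
    ∑ i, ∑ j ∈ Finset.univ.erase i, f i j
      = ∑ i, ∑ j ∈ Finset.univ.erase i, f j i := by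
  rw [Finset.sum_comm' (s' := fun j => Finset.univ.erase j) (t' := Finset.univ)]
  intro x y
  simp [eq_comm, ne_comm]

/-- If `A` is a real symmetric `n × n` matrix with nonpositive
off-diagonal entries which is diagonally dominant, and `q ≥ 1` is odd, then
`∑ i ∑ j u_i^q · u_j · A_{ij} ≥ 0` for every vector `u`. -/
theorem quadratic_form_nonneg_of_diag_dominant (n : ℕ) (hn : 1 ≤ n)
    (A : Matrix (Fin n) (Fin n) ℝ)
    (hsym : A.IsSymm)
    (hoff : ∀ i j : Fin n, i ≠ j → A i j ≤ 0)
    (hdom : ∀ k : Fin n, ∑ i ∈ Finset.univ.erase k, |A i k| ≤ A k k)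
    (q : ℕ) (hq : 1 ≤ q) (hodd : Odd q) (u : Fin n → ℝ) :
    0 ≤ ∑ i, ∑ j, u i ^ q * u j * A i j := by
  have hsym' : ∀ i j, A j i = A i j := fun i j => hsym.apply i j
  have habs : ∀ i j : Fin n, i ≠ j → A i j = -|A i j| := fun i j h => by
    rw [abs_of_nonpos (hoff i j h)]; ring
  set E : Fin n → Finset (Fin n) := fun i => Finset.univ.erase i with hE
  set D : ℝ := ∑ i, u i ^ (q+1) * (A i i - ∑ j ∈ E i, |A i j|) with hD
  set P : ℝ := ∑ i, ∑ j ∈ E i, |A i j| * ((u i ^ q - u j ^ q) * (u i - u j)) with hP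
  -- positivity of D
  have hDpos : 0 ≤ D := by
    apply Finset.sum_nonneg
    intro i _
    apply mul_nonneg (Even.pow_nonneg (hodd.add_one) _)
    have h1 : ∑ j ∈ E i, |A i j| = ∑ j ∈ E i, |A j i| := by
      apply Finset.sum_congr rfl; intro j _; rw [hsym']
    rw [h1]
    linarith [hdom i]
  -- positivity of P
  have hPpos : 0 ≤ P := by
    apply Finset.sum_nonneg; intro i _
    apply Finset.sum_nonneg; intro j _
    apply mul_nonneg (abs_nonneg _)
    rcases le_total (u j) (u i) with h | h
    · exact mul_nonneg (by simpa using sub_nonneg.2 (hodd.strictMono_pow.monotone h))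
        (sub_nonneg.2 h)
    · have ha : u i ^ q - u j ^ q ≤ 0 := by
        simpa using sub_nonpos.2 (hodd.strictMono_pow.monotone h)
      have hb : u i - u j ≤ 0 := sub_nonpos.2 h
      nlinarith
  -- symmetry swaps
  have h1 : ∑ i, ∑ j ∈ E i, |A i j| * u j ^ (q+1)
      = ∑ i, ∑ j ∈ E i, |A i j| * u i ^ (q+1) := by
    rw [swap_sum (fun i j => |A i j| * u j ^ (q+1))]
    exact Finset.sum_congr rfl fun i _ => Finset.sum_congr rfl fun j _ => by rw [hsym']
  have h2 : ∑ i, ∑ j ∈ E i, |A i j| * (u j ^ q * u i)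
      = ∑ i, ∑ j ∈ E i, |A i j| * (u i ^ q * u j) := by
    rw [swap_sum (fun i j => |A i j| * (u j ^ q * u i))]
    exact Finset.sum_congr rfl fun i _ => Finset.sum_congr rfl fun j _ => by rw [hsym']
  -- key identity
  have key : ∑ i, ∑ j, u i ^ q * u j * A i j = D + P / 2 := by
    have hsplit : ∀ i : Fin n, ∑ j, u i ^ q * u j * A i j
        = u i ^ (q+1) * A i i - ∑ j ∈ E i, |A i j| * (u i ^ q * u j) := by
      intro i
      rw [← Finset.sum_erase_add _ _ (Finset.mem_univ i)]
      have : ∑ j ∈ Finset.univ.erase i, u i ^ q * u j * A i j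
          = -∑ j ∈ E i, |A i j| * (u i ^ q * u j) := by
        rw [← Finset.sum_neg_distrib]
        apply Finset.sum_congr rfl
        intro j hj
        rw [abs_of_nonpos (hoff i j (Finset.ne_of_mem_erase hj).symm)]
        ring
      rw [this, pow_succ]
      ring
    have hPexp : P = (∑ i, ∑ j ∈ E i, |A i j| * u i ^ (q+1))
        + (∑ i, ∑ j ∈ E i, |A i j| * u j ^ (q+1))
        - (∑ i, ∑ j ∈ E i, |A i j| * (u i ^ q * u j))
        - (∑ i, ∑ j ∈ E i, |A i j| * (u j ^ q * u i)) := by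
      rw [hP, ← Finset.sum_add_distrib, ← Finset.sum_sub_distrib, ← Finset.sum_sub_distrib]
      apply Finset.sum_congr rfl
      intro i _
      rw [← Finset.sum_add_distrib, ← Finset.sum_sub_distrib, ← Finset.sum_sub_distrib]
      apply Finset.sum_congr rfl
      intro j _
      rw [pow_succ, pow_succ]
      ring
    have hDexp : D = (∑ i, u i ^ (q+1) * A i i)
        - ∑ i, ∑ j ∈ E i, |A i j| * u i ^ (q+1) := by
      rw [hD, ← Finset.sum_sub_distrib]
      apply Finset.sum_congr rfl
      intro i _
      rw [mul_sub, Finset.mul_sum]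
      congr 1
      exact Finset.sum_congr rfl fun j _ => mul_comm _ _
    rw [Finset.sum_congr rfl (fun i _ => hsplit i), Finset.sum_sub_distrib,
      hPexp, h1, h2, hDexp]
    ring
  rw [key]
  linarith
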